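/- For any p-string w and any 0 ≤ m < |w|, applying the implicit suffix link operation m times to the prev-encoding of w yields the prev-encoding of the suffix of w starting at position m+1, i.e., sl^m(⟨w⟩) = ⟨w[m+1:]⟩. -/

import Mathlib

open List

variable {σ π : Type*}

/-- The prev-encoding symbol of `w` at (0-indexed) position `i`:
constants are kept; a parameter is encoded by the distance to its
previous occurrence, or `0` if it has no previous occurrence. -/
def prevAt [DecidableEq σ] [DecidableEq π] (w : List (σ ⊕ π)) (i : ℕ) : σ ⊕ ℕ :=
  match w[i]? with
  | some (Sum.inl a) => Sum.inl a
  | some (Sum.inr x) =>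
      let s := (Finset.range i).filter (fun j => w[j]? = some (Sum.inr x))
      if h : s.Nonempty then Sum.inr (i - s.max' h) else Sum.inr 0
  | none => Sum.inr 0

/-- The prev-encoding `⟨w⟩` of a p-string `w`. -/
def prevEncode [DecidableEq σ] [DecidableEq π] (w : List (σ ⊕ π)) : List (σ ⊕ ℕ) :=
  (List.range w.length).map (prevAt w)

/-- The `k`-re-encoding `⟨u⟩ₖ` of a pv-string `u`: a numeric symbol `u[i]`
(1-indexed) is replaced by `0` whenever `u[i] ≥ i - k + 1`. -/
def reEncode (k : ℕ) (u : List (σ ⊕ ℕ)) : List (σ ⊕ ℕ) :=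
  (List.range u.length).map (fun i =>
    match u[i]? with
    | some (Sum.inl a) => Sum.inl a
    | some (Sum.inr m) => if i + 2 ≤ m + k then Sum.inr (0 : ℕ) else Sum.inr m
    | none => Sum.inr 0)

/-- The implicit suffix link `sl(u) = ⟨u[2:]⟩₁`. -/
def sl (u : List (σ ⊕ ℕ)) : List (σ ⊕ ℕ) := reEncode 1 u.tail

/-- The set of prev-encoded substrings of `T`. -/
def PrevSub [DecidableEq σ] [DecidableEq π] (T : List (σ ⊕ π)) : Set (List (σ ⊕ ℕ)) :=
  { u | ∃ w, w <:+: T ∧ u = prevEncode w }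

lemma prevEncode_length [DecidableEq σ] [DecidableEq π] (w : List (σ ⊕ π)) :
    (prevEncode w).length = w.length := by simp [prevEncode]

lemma reEncode_length (k : ℕ) (u : List (σ ⊕ ℕ)) : (reEncode k u).length = u.length := by
  simp [reEncode]

lemma prevEncode_getElem? [DecidableEq σ] [DecidableEq π] (w : List (σ ⊕ π)) (i : ℕ)
    (h : i < w.length) : (prevEncode w)[i]? = some (prevAt w i) := by
  simp [prevEncode, List.getElem?_map, List.getElem?_range h]

lemma key [DecidableEq σ] [DecidableEq π] (w : List (σ ⊕ π)) (i : ℕ)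
    (h : i + 1 < w.length) :
    (match some (prevAt w (i+1)) with
     | some (Sum.inl a) => Sum.inl a
     | some (Sum.inr m) => if i + 2 ≤ m + 1 then Sum.inr (0:ℕ) else Sum.inr m
     | none => Sum.inr (0:ℕ))
    = prevAt w.tail i := by
  have htail : ∀ j : ℕ, w.tail[j]? = w[j+1]? := fun j => List.getElem?_tail
  have hi : i < w.tail.length := by
    rw [List.length_tail]; omega
  obtain ⟨v, hv⟩ : ∃ v, w[i+1]? = some v := ⟨w[i+1], (List.getElem?_eq_some_iff).2 ⟨h, rfl⟩⟩
  have hv' : w.tail[i]? = some v := by rw [htail]; exact hv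
  cases v with
  | inl a => simp [prevAt, hv, hv']
  | inr x =>
    set s := (Finset.range (i+1)).filter (fun j => w[j]? = some (Sum.inr x)) with hs
    set s' := (Finset.range i).filter (fun j => w.tail[j]? = some (Sum.inr x)) with hs'
    have hmem : ∀ j, j ∈ s ↔ j < i + 1 ∧ w[j]? = some (Sum.inr x) := by
      intro j; simp [hs, Finset.mem_filter, Finset.mem_range]
    have hmem' : ∀ j, j ∈ s' ↔ j < i ∧ w[j+1]? = some (Sum.inr x) := by
      intro j; simp [hs', Finset.mem_filter, Finset.mem_range, htail]
    by_cases h' : s'.Nonempty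
    · have hM := Finset.max'_mem s' h'
      rw [hmem'] at hM
      have hMs : s'.max' h' + 1 ∈ s := (hmem _).2 ⟨by omega, hM.2⟩
      have hne : s.Nonempty := ⟨s'.max' h' + 1, hMs⟩
      have hmax : s.max' hne = s'.max' h' + 1 := by
        apply Nat.le_antisymm
        · apply Finset.max'_le
          intro j hj
          rcases Nat.eq_zero_or_pos j with hj0 | hj0
          · omega
          · obtain ⟨k, rfl⟩ := Nat.exists_eq_add_of_lt hj0
            rw [zero_add] at hj ⊢
            have : k ∈ s' := (hmem' _).2 ⟨by have := (hmem _).1 hj; omega, ((hmem _).1 hj).2⟩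
            have := Finset.le_max' s' k this
            omega
        · exact Finset.le_max' s _ hMs
      have hMi : s'.max' h' < i := hM.1
      simp only [prevAt, hv, hv']
      rw [dif_pos hne, dif_pos h', hmax]
      have hcond : ¬ (i + 2 ≤ (i + 1 - (s'.max' h' + 1)) + 1) := by omega
      simp only [hcond, if_false]
      have harith : i + 1 - (s'.max' h' + 1) = i - s'.max' h' := by omega
      rw [harith]
    · have hsub : ∀ j ∈ s, j = 0 := by
        intro j hj
        by_contra hj0
        obtain ⟨k, rfl⟩ := Nat.exists_eq_add_of_lt (Nat.pos_of_ne_zero hj0)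
        rw [zero_add] at hj
        exact h' ⟨k, (hmem' _).2 ⟨by have := (hmem _).1 hj; omega, ((hmem _).1 hj).2⟩⟩
      simp only [prevAt, hv, hv']
      rw [dif_neg h']
      by_cases hne : s.Nonempty
      · have h0 : s.max' hne = 0 := hsub _ (Finset.max'_mem s hne)
        rw [dif_pos hne, h0]
        simp
      · rw [dif_neg hne]
        simp

lemma sl_prevEncode [DecidableEq σ] [DecidableEq π] (w : List (σ ⊕ π)) :
    sl (prevEncode w) = prevEncode w.tail := by
  apply List.ext_getElem?
  intro i
  have hlen : (sl (prevEncode w)).length = w.length - 1 := by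
    simp [sl, reEncode_length, List.length_tail, prevEncode_length]
  have hlen' : (prevEncode w.tail).length = w.length - 1 := by
    simp [prevEncode_length, List.length_tail]
  by_cases hi : i < w.length - 1
  · have h1 : i + 1 < w.length := by omega
    have htail : ((prevEncode w).tail)[i]? = some (prevAt w (i+1)) := by
      rw [List.getElem?_tail, prevEncode_getElem? w _ h1]
    have lhs : (sl (prevEncode w))[i]? = some
        (match some (prevAt w (i+1)) with
        | some (Sum.inl a) => Sum.inl a
        | some (Sum.inr m) => if i + 2 ≤ m + 1 then Sum.inr (0:ℕ) else Sum.inr m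
        | none => Sum.inr (0:ℕ)) := by
      simp only [sl, reEncode]
      rw [List.getElem?_map, List.getElem?_range (by
        rw [List.length_tail, prevEncode_length]; omega)]
      simp only [Option.map_some, htail]
      rcases prevAt w (i+1) with a | m <;> rfl
    rw [lhs, prevEncode_getElem? w.tail i (by rw [List.length_tail]; omega)]
    exact congrArg some (key w i h1)
  · rw [List.getElem?_eq_none (by omega), List.getElem?_eq_none (by omega)]

/-- Iterating the implicit suffix link `m` times on `⟨w⟩` yields the
prev-encoding of the suffix of `w` starting at position `m + 1`. -/
theorem sl_iterate_prevEncode [DecidableEq σ] [DecidableEq π]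
    (w : List (σ ⊕ π)) (m : ℕ) (hm : m < w.length) :
    sl^[m] (prevEncode w) = prevEncode (w.drop m) := by
  clear hm
  induction m with
  | zero => simp
  | succ m ih =>
    rw [Function.iterate_succ_apply', ih, sl_prevEncode, ← List.tail_drop]
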